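/- arXiv:1006.4417 — 2 statements merged into one kernel-verified Lean document; each statement's English description precedes it below -/
import Mathlib

section
/- Suppose α² + β² = γ² with α, β, γ > 0, and let Z_0, Z_1 be cylinder functions with fixed coefficients. Define P(x) = (2αβ)^{−1}[γx·Z_1(γx)Z_0(αx)Z_0(βx) − αx·Z_1(αx)Z_0(βx)Z_0(γx) − βx·Z_1(βx)Z_0(γx)Z_0(αx)]. Then P'(x) = x·Z_1(αx)·Z_1(βx)·Z_0(γx) for all x > 0. -/
/-- `Z₀, Z₁` are cylinder functions of orders 0 and 1 with the same
coefficients, characterized by `Z₀' = -Z₁` and `Z₁'(t) = Z₀(t) - Z₁(t)/t`. -/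
theorem cylinder_pythagorean_antideriv
    (Z0 Z1 : ℝ → ℝ)
    (h0 : ∀ t : ℝ, t ≠ 0 → HasDerivAt Z0 (-Z1 t) t)
    (h1 : ∀ t : ℝ, t ≠ 0 → HasDerivAt Z1 (Z0 t - Z1 t / t) t)
    (α β γ : ℝ) (hα : 0 < α) (hβ : 0 < β) (hγ : 0 < γ) (hpyth : α ^ 2 + β ^ 2 = γ ^ 2) :
    ∀ x : ℝ, 0 < x →
      HasDerivAt (fun y => (2 * α * β)⁻¹ *
          (γ * y * Z1 (γ * y) * Z0 (α * y) * Z0 (β * y)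
            - α * y * Z1 (α * y) * Z0 (β * y) * Z0 (γ * y)
            - β * y * Z1 (β * y) * Z0 (γ * y) * Z0 (α * y)))
        (x * Z1 (α * x) * Z1 (β * x) * Z0 (γ * x)) x := by
  intro x hx
  have hx' : x ≠ 0 := hx.ne'
  have d0 : ∀ δ : ℝ, δ ≠ 0 → HasDerivAt (fun y => Z0 (δ * y)) (-Z1 (δ * x) * δ) x := by
    intro δ hδ
    simpa [Function.comp_def] using (h0 _ (mul_ne_zero hδ hx')).comp x ((hasDerivAt_id x).const_mul δ)
  have d1 : ∀ δ : ℝ, δ ≠ 0 →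
      HasDerivAt (fun y => Z1 (δ * y)) ((Z0 (δ * x) - Z1 (δ * x) / (δ * x)) * δ) x := by
    intro δ hδ
    simpa [Function.comp_def] using (h1 _ (mul_ne_zero hδ hx')).comp x ((hasDerivAt_id x).const_mul δ)
  have lin : ∀ δ : ℝ, HasDerivAt (fun y => δ * y) δ x := by
    intro δ
    simpa using (hasDerivAt_id x).const_mul δ
  have T : ∀ δ ε ζ : ℝ, δ ≠ 0 → ε ≠ 0 → ζ ≠ 0 →
      HasDerivAt (fun y => δ * y * Z1 (δ * y) * Z0 (ε * y) * Z0 (ζ * y))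
        (((δ * Z1 (δ * x) + δ * x * ((Z0 (δ * x) - Z1 (δ * x) / (δ * x)) * δ)) * Z0 (ε * x)
            + δ * x * Z1 (δ * x) * (-Z1 (ε * x) * ε)) * Z0 (ζ * x)
          + δ * x * Z1 (δ * x) * Z0 (ε * x) * (-Z1 (ζ * x) * ζ)) x := by
    intro δ ε ζ hδ hε hζ
    exact (((lin δ).mul (d1 δ hδ)).mul (d0 ε hε)).mul (d0 ζ hζ)
  have H := (((T γ α β hγ.ne' hα.ne' hβ.ne').sub (T α β γ hα.ne' hβ.ne' hγ.ne')).sub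
      (T β γ α hβ.ne' hγ.ne' hα.ne')).const_mul (2 * α * β)⁻¹
  refine H.congr_deriv (Eq.symm ?_)
  have hαx : α * x ≠ 0 := mul_ne_zero hα.ne' hx'
  have hβx : β * x ≠ 0 := mul_ne_zero hβ.ne' hx'
  have hγx : γ * x ≠ 0 := mul_ne_zero hγ.ne' hx'
  field_simp
  rw [mul_comm x γ, mul_comm x α, mul_comm x β]
  linear_combination (x * Z0 (γ * x) * Z0 (α * x) * Z0 (β * x)) * hpyth
end

section
/- Let q ∈ {0, 1} and let j_{q,m}, j_{q,n}, j_{q,p} be positive zeros of the Bessel function J_q. Define C_{000} = ∫₀¹ x·J_0(j_{q,m}x)·J_0(j_{q,n}x)·J_0(j_{q,p}x) dx and C_{110} = ∫₀¹ x·J_1(j_{q,m}x)·J_1(j_{q,n}x)·J_0(j_{q,p}x) dx. If q = 1 (so J_1 vanishes at all three parameters), then C_{110} = C_{000}·(j_{1,m}² + j_{1,n}² − j_{1,p}²)/(2·j_{1,m}·j_{1,n}). -/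
/-- For `J₀, J₁` the Bessel functions of the first kind of orders 0 and 1
(characterized by `J₀' = -J₁` and `(x J₁)' = x J₀`), and `jm, jn, jp` positive
zeros of `J₁`, the triple-product integrals satisfy
`C₁₁₀ = C₀₀₀ (jm² + jn² - jp²)/(2 jm jn)`. -/
theorem bessel_triple_product_C110_eq
    (J0 J1 : ℝ → ℝ)
    (h0 : ∀ t : ℝ, HasDerivAt J0 (-J1 t) t)
    (h1 : ∀ t : ℝ, HasDerivAt (fun s => s * J1 s) (t * J0 t) t)
    (jm jn jp : ℝ) (hm : 0 < jm) (hn : 0 < jn) (hp : 0 < jp)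
    (hzm : J1 jm = 0) (hzn : J1 jn = 0) (hzp : J1 jp = 0) :
    ∫ x in (0:ℝ)..1, x * J1 (jm * x) * J1 (jn * x) * J0 (jp * x)
      = (∫ x in (0:ℝ)..1, x * J0 (jm * x) * J0 (jn * x) * J0 (jp * x))
        * ((jm ^ 2 + jn ^ 2 - jp ^ 2) / (2 * jm * jn)) := by
  have hJ0c : Continuous J0 :=
    continuous_iff_continuousAt.2 fun x => (h0 x).differentiableAt.continuousAt
  have hgc : Continuous (fun s : ℝ => s * J1 s) :=
    continuous_iff_continuousAt.2 fun x => (h1 x).differentiableAt.continuousAt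
  -- modified J1, continuous, agreeing with J1 away from 0
  set J1t : ℝ → ℝ := fun s => if s = 0 then 0 else J1 s with hJ1t
  have hJ1t_eq : ∀ s : ℝ, s ≠ 0 → J1t s = J1 s := by
    intro s hs; simp [hJ1t, hs]
  have hJ1tc : Continuous J1t := by
    rw [continuous_iff_continuousAt]
    intro x
    by_cases hx : x = 0
    · subst hx
      have hslope : Filter.Tendsto (slope (fun s : ℝ => s * J1 s) 0) (nhdsWithin 0 {(0:ℝ)}ᶜ)
          (nhds 0) := by
        have := (hasDerivAt_iff_tendsto_slope).1 (h1 0)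
        simpa using this
      have h2 : Filter.Tendsto J1t (nhdsWithin 0 {(0:ℝ)}ᶜ) (nhds 0) := by
        refine hslope.congr' ?_
        filter_upwards [self_mem_nhdsWithin] with s hs
        have hs0 : s ≠ 0 := hs
        simp [slope, hJ1t, hs0, mul_comm, div_eq_iff hs0]
      have h3 : Filter.Tendsto J1t (pure (0:ℝ)) (nhds 0) := by
        simpa [hJ1t] using tendsto_pure_nhds J1t 0
      have h4 : Filter.Tendsto J1t (nhds 0) (nhds 0) := by
        have h5 := Filter.tendsto_sup.mpr ⟨h2, h3⟩
        rwa [nhdsNE_sup_pure (0:ℝ)] at h5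
      simpa [ContinuousAt, hJ1t] using h4
    · have hev : J1t =ᶠ[nhds x] fun s => (s * J1 s) / s := by
        filter_upwards [isOpen_compl_singleton.mem_nhds (by simpa using hx : x ∈ ({(0:ℝ)}ᶜ))]
          with s hs
        have hs0 : s ≠ 0 := hs
        field_simp [hJ1t, hs0]
        exact hJ1t_eq s hs0
      have : ContinuousAt (fun s : ℝ => (s * J1 s) / s) x :=
        (hgc.continuousAt).div continuousAt_id hx
      exact this.congr hev.symm
  -- derivative building blocks
  have hA : ∀ (a x : ℝ), HasDerivAt (fun y : ℝ => J0 (a * y)) (-(a * J1 (a * x))) x := by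
    intro a x
    have h := (h0 (a * x)).comp x ((hasDerivAt_id x).const_mul a)
    refine h.congr_deriv ?_
    ring
  have hB : ∀ (a : ℝ), a ≠ 0 → ∀ x : ℝ,
      HasDerivAt (fun y : ℝ => y * J1 (a * y)) (a * (x * J0 (a * x))) x := by
    intro a ha x
    have key : (fun y : ℝ => y * J1 (a * y)) = fun y : ℝ => a⁻¹ * ((a * y) * J1 (a * y)) := by
      funext y; field_simp
    rw [key]
    have h := ((h1 (a * x)).comp x ((hasDerivAt_id x).const_mul a)).const_mul a⁻¹
    refine h.congr_deriv ?_
    field_simp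
  -- antiderivative F and its derivative
  have hFd : ∀ x : ℝ, HasDerivAt (fun x : ℝ =>
      -jn * ((x * J1 (jn * x)) * (J0 (jm * x) * J0 (jp * x)))
      + jp * ((x * J1 (jp * x)) * (J0 (jn * x) * J0 (jm * x)))
      - jm * ((x * J1 (jm * x)) * (J0 (jn * x) * J0 (jp * x))))
      (2 * jm * jn * (x * J1 (jm * x) * J1 (jn * x) * J0 (jp * x))
       - (jm ^ 2 + jn ^ 2 - jp ^ 2) * (x * J0 (jm * x) * J0 (jn * x) * J0 (jp * x))) x := by
    intro x
    have t1 := ((hB jn hn.ne' x).mul ((hA jm x).mul (hA jp x))).const_mul (-jn)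
    have t2 := ((hB jp hp.ne' x).mul ((hA jn x).mul (hA jm x))).const_mul jp
    have t3 := ((hB jm hm.ne' x).mul ((hA jn x).mul (hA jp x))).const_mul jm
    have h := (t1.add t2).sub t3
    refine h.congr_deriv ?_
    simp only [Pi.mul_apply]; ring
  -- integrability
  have hint0 : IntervalIntegrable (fun x : ℝ => x * J0 (jm * x) * J0 (jn * x) * J0 (jp * x))
      MeasureTheory.volume 0 1 := by
    apply Continuous.intervalIntegrable
    exact ((continuous_id.mul (hJ0c.comp (continuous_const.mul continuous_id))).mul
      (hJ0c.comp (continuous_const.mul continuous_id))).mul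
      (hJ0c.comp (continuous_const.mul continuous_id))
  have hI1eq : (fun x : ℝ => x * J1 (jm * x) * J1 (jn * x) * J0 (jp * x))
      = fun x : ℝ => x * J1t (jm * x) * J1t (jn * x) * J0 (jp * x) := by
    funext x
    rcases eq_or_ne x 0 with rfl | hx
    · simp
    · rw [hJ1t_eq _ (mul_ne_zero hm.ne' hx), hJ1t_eq _ (mul_ne_zero hn.ne' hx)]
  have hint1 : IntervalIntegrable (fun x : ℝ => x * J1 (jm * x) * J1 (jn * x) * J0 (jp * x))
      MeasureTheory.volume 0 1 := by
    rw [hI1eq]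
    apply Continuous.intervalIntegrable
    exact ((continuous_id.mul (hJ1tc.comp (continuous_const.mul continuous_id))).mul
      (hJ1tc.comp (continuous_const.mul continuous_id))).mul
      (hJ0c.comp (continuous_const.mul continuous_id))
  have hintf : IntervalIntegrable (fun x : ℝ =>
      2 * jm * jn * (x * J1 (jm * x) * J1 (jn * x) * J0 (jp * x))
      - (jm ^ 2 + jn ^ 2 - jp ^ 2) * (x * J0 (jm * x) * J0 (jn * x) * J0 (jp * x)))
      MeasureTheory.volume 0 1 :=
    (hint1.const_mul _).sub (hint0.const_mul _)
  -- FTC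
  have hFTC := intervalIntegral.integral_eq_sub_of_hasDerivAt
      (f := fun x : ℝ =>
        -jn * ((x * J1 (jn * x)) * (J0 (jm * x) * J0 (jp * x)))
        + jp * ((x * J1 (jp * x)) * (J0 (jn * x) * J0 (jm * x)))
        - jm * ((x * J1 (jm * x)) * (J0 (jn * x) * J0 (jp * x))))
      (fun x _ => hFd x) hintf
  rw [intervalIntegral.integral_sub (hint1.const_mul _) (hint0.const_mul _),
      intervalIntegral.integral_const_mul, intervalIntegral.integral_const_mul] at hFTC
  norm_num [hzm, hzn, hzp] at hFTC
  have h2 : (2 : ℝ) * jm * jn ≠ 0 := by positivity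
  rw [mul_div_assoc', eq_div_iff h2]
  nlinarith [hFTC]
end
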